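/- Let x : ℝ → ℝ³ be twice differentiable and u₁, u₂ : ℝ → ℝ with u₁ differentiable, satisfying x'(t) = u₁(t)·g₁(x(t)) + u₂(t)·g₂(x(t)) for all t, where g₁(x) = (cos x₃, sin x₃, 0) and g₂(x) = (0,0,1). Then at every t with u₁(t) ≠ 0, u₂(t) = (x₂''(t)·x₁'(t) − x₁''(t)·x₂'(t)) / (x₁'(t)² + x₂'(t)²). -/

import Mathlib

/-- Kinematic car: first input vector field `g₁(x) = (cos x₃, sin x₃, 0)`. -/
noncomputable def carG1 (x : Fin 3 → ℝ) : Fin 3 → ℝ := ![Real.cos (x 2), Real.sin (x 2), 0]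

/-- Kinematic car: second input vector field `g₂(x) = (0, 0, 1)`. -/
noncomputable def carG2 (_x : Fin 3 → ℝ) : Fin 3 → ℝ := ![0, 0, 1]

theorem car_second_input_from_flat_outputs
    (x : ℝ → (Fin 3 → ℝ)) (u₁ u₂ : ℝ → ℝ)
    (hx : Differentiable ℝ x) (hx' : Differentiable ℝ (deriv x))
    (hu₁ : Differentiable ℝ u₁)
    (hsys : ∀ t, deriv x t = u₁ t • carG1 (x t) + u₂ t • carG2 (x t)) :
    ∀ t : ℝ, u₁ t ≠ 0 →
      u₂ t = (deriv (deriv (fun s => x s 1)) t * deriv (fun s => x s 0) t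
              - deriv (deriv (fun s => x s 0)) t * deriv (fun s => x s 1) t)
            / ((deriv (fun s => x s 0) t) ^ 2 + (deriv (fun s => x s 1) t) ^ 2) := by
  -- component derivatives
  have hcomp : ∀ (i : Fin 3) (s : ℝ),
      HasDerivAt (fun r => x r i) (deriv x s i) s := fun i s =>
    (hasDerivAt_pi.mp (hx s).hasDerivAt) i
  have hd0 : ∀ s, deriv (fun r => x r 0) s = u₁ s * Real.cos (x s 2) := by
    intro s
    rw [(hcomp 0 s).deriv, hsys s]
    simp [carG1, carG2]
  have hd1 : ∀ s, deriv (fun r => x r 1) s = u₁ s * Real.sin (x s 2) := by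
    intro s
    rw [(hcomp 1 s).deriv, hsys s]
    simp [carG1, carG2]
  have hd2 : ∀ s, deriv x s 2 = u₂ s := by
    intro s
    rw [hsys s]; simp [carG1, carG2]
  -- θ has derivative u₂
  have hθ : ∀ s, HasDerivAt (fun r => x r 2) (u₂ s) s := by
    intro s; have := hcomp 2 s; rwa [hd2 s] at this
  intro t hu
  -- second derivatives
  have h20 : deriv (deriv (fun s => x s 0)) t
      = deriv u₁ t * Real.cos (x t 2) - u₁ t * (Real.sin (x t 2) * u₂ t) := by
    have heq : deriv (fun s => x s 0) = fun s => u₁ s * Real.cos (x s 2) :=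
      funext hd0
    rw [heq]
    have h1 : HasDerivAt (fun s => Real.cos (x s 2))
        (-Real.sin (x t 2) * u₂ t) t :=
      by have := (Real.hasDerivAt_cos (x t 2)).comp t (hθ t); exact this
    have := ((hu₁ t).hasDerivAt.mul h1).deriv
    exact this.trans (by ring)
  have h21 : deriv (deriv (fun s => x s 1)) t
      = deriv u₁ t * Real.sin (x t 2) + u₁ t * (Real.cos (x t 2) * u₂ t) := by
    have heq : deriv (fun s => x s 1) = fun s => u₁ s * Real.sin (x s 2) :=
      funext hd1
    rw [heq]
    have h1 : HasDerivAt (fun s => Real.sin (x s 2))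
        (Real.cos (x t 2) * u₂ t) t :=
      by have := (Real.hasDerivAt_sin (x t 2)).comp t (hθ t); exact this
    have := ((hu₁ t).hasDerivAt.mul h1).deriv
    exact this
  rw [h20, h21, hd0 t, hd1 t]
  have hpyth := Real.sin_sq_add_cos_sq (x t 2)
  have hden : (u₁ t * Real.cos (x t 2)) ^ 2 + (u₁ t * Real.sin (x t 2)) ^ 2
      = u₁ t ^ 2 := by
    have : (u₁ t * Real.cos (x t 2)) ^ 2 + (u₁ t * Real.sin (x t 2)) ^ 2
        = u₁ t ^ 2 * (Real.sin (x t 2) ^ 2 + Real.cos (x t 2) ^ 2) := by ring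
    rw [this, hpyth, mul_one]
  rw [hden]
  have hnum : (deriv u₁ t * Real.sin (x t 2) + u₁ t * (Real.cos (x t 2) * u₂ t))
        * (u₁ t * Real.cos (x t 2))
      - (deriv u₁ t * Real.cos (x t 2) - u₁ t * (Real.sin (x t 2) * u₂ t))
        * (u₁ t * Real.sin (x t 2)) = u₂ t * u₁ t ^ 2 := by
    have h : (deriv u₁ t * Real.sin (x t 2) + u₁ t * (Real.cos (x t 2) * u₂ t))
        * (u₁ t * Real.cos (x t 2))
      - (deriv u₁ t * Real.cos (x t 2) - u₁ t * (Real.sin (x t 2) * u₂ t))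
        * (u₁ t * Real.sin (x t 2))
      = u₂ t * u₁ t ^ 2 * (Real.sin (x t 2) ^ 2 + Real.cos (x t 2) ^ 2) := by ring
    rw [h, hpyth, mul_one]
  rw [hnum]
  field_simp
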